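/- Let n and k1 be powers of two with 2k1 ≤ n, let X, G ∈ ℂ^n with Ĝ symmetric about zero (Ĝ_{−f} = Ĝ_f for all f), fix r ∈ [2k1], set a_r = nr/(2k1) and X^r_i = X_{i + a_r}, and define Z^r ∈ ℂ^{n/k1} by Z^r_j = (1/k1) Σ_{i∈[k1]} (G · X^r)_{j + (n/k1)·i}. Then for every j ∈ [n/k1]: Ẑ^r_j = Σ_{f∈[n]} Ĝ_{f − k1·j} · X̂_f · ω_n^{a_r·f} (in particular Ẑ^r_j = (X̂^r ⋆ Ĝ)_{j·k1}, the duality of subsampling and aliasing). -/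

import Mathlib

open Finset

/-- Discrete Fourier transform of a length-`n` signal, with `1/n` normalization. -/
noncomputable def dft (n : ℕ) [NeZero n] (X : ZMod n → ℂ) : ZMod n → ℂ :=
  fun f => (n : ℂ)⁻¹ * ∑ t : ZMod n, X t *
    Complex.exp (-(2 * Real.pi * Complex.I) * ((f * t).val : ℂ) / (n : ℂ))

/-- `Z_j = (1/k1) ∑_{i ∈ [k1]} (G · X^a)_{j + (n/k1)·i}`, where `X^a_t = X_{t+a}`:
a downsampled (aliased) version of the filtered, time-shifted signal. -/
noncomputable def downsample (n k1 : ℕ) [NeZero k1] (X G : ZMod n → ℂ) (a : ZMod n) :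
    ZMod (n / k1) → ℂ :=
  fun j => (k1 : ℂ)⁻¹ * ∑ i : ZMod k1,
    G ((j.val : ZMod n) + ((n / k1 : ℕ) : ZMod n) * (i.val : ZMod n)) *
      X ((j.val : ZMod n) + ((n / k1 : ℕ) : ZMod n) * (i.val : ZMod n) + a)

noncomputable def eZ (n : ℕ) (a : ℤ) : ℂ :=
  Complex.exp (-(2 * Real.pi * Complex.I) * a / n)

lemma eZ_add (n : ℕ) (a b : ℤ) : eZ n (a + b) = eZ n a * eZ n b := by
  unfold eZ
  rw [← Complex.exp_add]
  congr 1
  push_cast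
  ring

lemma eZ_congr (n : ℕ) [NeZero n] {a b : ℤ} (h : a ≡ b [ZMOD (n : ℤ)]) :
    eZ n a = eZ n b := by
  obtain ⟨k, hk⟩ := h.dvd
  have hb : b = a + n * k := by linarith [hk]
  subst hb
  rw [eZ_add]
  have : eZ n (n * k) = 1 := by
    unfold eZ
    have hn : (n : ℂ) ≠ 0 := by exact_mod_cast (NeZero.ne n)
    have : -(2 * Real.pi * Complex.I) * ((n : ℤ) * k : ℤ) / n
        = (-k : ℤ) * (2 * Real.pi * Complex.I) := by
      push_cast
      field_simp
    rw [this, Complex.exp_int_mul_two_pi_mul_I]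
  rw [this, mul_one]

noncomputable def chr (n : ℕ) [NeZero n] (x : ZMod n) : ℂ := eZ n (x.val : ℤ)

lemma chr_intCast (n : ℕ) [NeZero n] (a : ℤ) : chr n (a : ZMod n) = eZ n a := by
  unfold chr
  apply eZ_congr
  rw [← ZMod.intCast_eq_intCast_iff]
  simp [ZMod.natCast_val, ZMod.cast_id]

lemma chr_eq (n : ℕ) [NeZero n] (a : ℤ) (x : ZMod n) (h : (a : ZMod n) = x) :
    chr n x = eZ n a := by rw [← h, chr_intCast]

lemma chr_add (n : ℕ) [NeZero n] (x y : ZMod n) :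
    chr n (x + y) = chr n x * chr n y := by
  have h : ((x.val + y.val : ℤ) : ZMod n) = x + y := by
    push_cast
    simp [ZMod.natCast_val, ZMod.cast_id]
  rw [chr_eq n _ _ h, eZ_add]
  rfl

lemma chr_zero (n : ℕ) [NeZero n] : chr n 0 = 1 := by
  have h : ((0 : ℤ) : ZMod n) = 0 := by simp
  rw [chr_eq n _ _ h]
  unfold eZ
  simp

lemma chr_ne_one (n : ℕ) [NeZero n] {c : ZMod n} (hc : c ≠ 0) : chr n c ≠ 1 := by
  unfold chr eZ
  intro h
  rw [Complex.exp_eq_one_iff] at h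
  obtain ⟨k, hk⟩ := h
  have hn : (n : ℂ) ≠ 0 := by exact_mod_cast (NeZero.ne n)
  have h2 : (2 * (Real.pi : ℂ) * Complex.I) ≠ 0 := by
    simp [Real.pi_ne_zero, Complex.I_ne_zero]
  rw [div_eq_iff hn] at hk
  have hv : (2 * (Real.pi:ℂ) * Complex.I) * ((c.val : ℤ) : ℂ)
      = (2 * (Real.pi:ℂ) * Complex.I) * ((-k * n : ℤ) : ℂ) := by
    push_cast
    linear_combination -hk
  have hv' : ((c.val : ℤ) : ℂ) = ((-k * n : ℤ) : ℂ) := mul_left_cancel₀ h2 hv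
  have hv'' : (c.val : ℤ) = -k * n := by exact_mod_cast hv'
  have hdvd : (n : ℕ) ∣ c.val := by
    have : (n:ℤ) ∣ (c.val:ℤ) := ⟨-k, by linarith⟩
    exact_mod_cast Int.ofNat_dvd.mp (by exact_mod_cast this)
  have hval : c.val = 0 := Nat.eq_zero_of_dvd_of_lt hdvd (ZMod.val_lt c)
  exact hc ((ZMod.val_eq_zero c).mp hval)

lemma dft_eq (n : ℕ) [NeZero n] (W : ZMod n → ℂ) (h : ZMod n) :
    dft n W h = (n : ℂ)⁻¹ * ∑ t : ZMod n, W t * chr n (h * t) := by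
  unfold dft chr eZ
  norm_cast

lemma chr_sum (n : ℕ) [NeZero n] (c : ZMod n) :
    ∑ t : ZMod n, chr n (c * t) = if c = 0 then (n : ℂ) else 0 := by
  by_cases hc : c = 0
  · simp [hc, chr_zero, ZMod.card]
  · simp only [hc, if_false]
    have key : chr n c * (∑ t : ZMod n, chr n (c * t)) = ∑ t : ZMod n, chr n (c * t) := by
      rw [mul_sum]
      apply Fintype.sum_equiv (Equiv.addRight (1 : ZMod n))
      intro t
      simp only [Equiv.coe_addRight]
      rw [← chr_add]
      congr 1
      ring
    have h' : (chr n c - 1) * (∑ t : ZMod n, chr n (c * t)) = 0 := by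
      linear_combination key
    rcases mul_eq_zero.mp h' with h | h
    · exact absurd (sub_eq_zero.mp h) (chr_ne_one n hc)
    · exact h

lemma dft_mul_shift (n : ℕ) [NeZero n] (G X : ZMod n → ℂ) (a g : ZMod n) :
    dft n (fun t => G t * X (t + a)) g
      = ∑ f : ZMod n, dft n G (g - f) * dft n X f * chr n (-(a * f)) := by
  have hn : (n : ℂ) ≠ 0 := by exact_mod_cast (NeZero.ne n)
  simp only [dft_eq]
  have step : ∀ f : ZMod n,
      ((n:ℂ)⁻¹ * ∑ s, G s * chr n ((g - f) * s)) * ((n:ℂ)⁻¹ * ∑ u, X u * chr n (f * u))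
        * chr n (-(a * f))
      = (n:ℂ)⁻¹ * (n:ℂ)⁻¹ * ∑ s, ∑ u, G s * X u * chr n (g * s) * chr n (f * (u - s - a)) := by
    intro f
    simp only [Finset.sum_mul, Finset.mul_sum]
    rw [Finset.sum_comm]
    refine Finset.sum_congr rfl fun s _ => ?_
    refine Finset.sum_congr rfl fun u _ => ?_
    have hchr : chr n ((g - f) * s) * chr n (f * u) * chr n (-(a * f))
        = chr n (g * s) * chr n (f * (u - s - a)) := by
      rw [← chr_add, ← chr_add, ← chr_add]
      congr 1
      ring
    linear_combination ((n:ℂ)⁻¹ * (n:ℂ)⁻¹ * G s * X u) * hchr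
  calc (n:ℂ)⁻¹ * ∑ t, G t * X (t + a) * chr n (g * t)
      = ∑ f : ZMod n, (n:ℂ)⁻¹ * (n:ℂ)⁻¹ *
          ∑ s, ∑ u, G s * X u * chr n (g * s) * chr n (f * (u - s - a)) := ?_
    _ = ∑ f, ((n:ℂ)⁻¹ * ∑ s, G s * chr n ((g - f) * s)) *
          ((n:ℂ)⁻¹ * ∑ u, X u * chr n (f * u)) * chr n (-(a * f)) :=
        (Finset.sum_congr rfl fun f _ => (step f).symm)
  have swap : ∑ f : ZMod n, (n:ℂ)⁻¹ * (n:ℂ)⁻¹ *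
        ∑ s, ∑ u, G s * X u * chr n (g * s) * chr n (f * (u - s - a))
      = (n:ℂ)⁻¹ * (n:ℂ)⁻¹ *
        ∑ s, ∑ u, G s * X u * chr n (g * s) * ∑ f : ZMod n, chr n ((u - s - a) * f) := by
    rw [← Finset.mul_sum]
    congr 1
    rw [Finset.sum_comm]
    refine Finset.sum_congr rfl fun s _ => ?_
    rw [Finset.sum_comm]
    refine Finset.sum_congr rfl fun u _ => ?_
    rw [Finset.mul_sum]
    refine Finset.sum_congr rfl fun f _ => ?_
    rw [mul_comm (u - s - a) f]
  rw [swap]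
  simp only [chr_sum, sub_sub, sub_eq_zero]
  have inner : ∀ s : ZMod n,
      ∑ u : ZMod n, G s * X u * chr n (g * s) * (if u = s + a then (n:ℂ) else 0)
        = G s * X (s + a) * chr n (g * s) * n := by
    intro s
    rw [Finset.sum_eq_single (s + a)]
    · simp
    · intro u _ hu
      simp [hu]
    · simp
  simp only [inner]
  rw [← Finset.sum_mul]
  field_simp

lemma eZ_mul_left (k m : ℕ) (hk : (k:ℂ) ≠ 0) (a : ℤ) : eZ (k * m) (k * a) = eZ m a := by
  unfold eZ
  congr 1
  push_cast
  rw [show -(2 * (Real.pi:ℂ) * Complex.I) * ((k:ℂ) * a) = (k:ℂ) * (-(2 * (Real.pi:ℂ) * Complex.I) * a) by ring,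
    mul_div_mul_left _ _ hk]

lemma downsample_dft (n k1 : ℕ) [NeZero n] [NeZero k1] [NeZero (n / k1)]
    (hnk : k1 * (n / k1) = n) (X G : ZMod n → ℂ) (a : ZMod n) (j : ZMod (n / k1)) :
    dft (n / k1) (downsample n k1 X G a) j
      = dft n (fun t => G t * X (t + a)) ((k1 : ZMod n) * (j.val : ZMod n)) := by
  have hkC : (k1:ℂ) ≠ 0 := by exact_mod_cast (NeZero.ne k1)
  set φ : ZMod (n / k1) × ZMod k1 → ZMod n :=
    fun p => (p.1.val : ZMod n) + ((n / k1 : ℕ) : ZMod n) * (p.2.val : ZMod n) with hφ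
  have hφval : ∀ p : ZMod (n / k1) × ZMod k1, (φ p).val = p.1.val + (n / k1) * p.2.val := by
    intro p
    have hlt : p.1.val + (n / k1) * p.2.val < n := by
      calc p.1.val + (n / k1) * p.2.val < (n / k1) + (n / k1) * p.2.val :=
            Nat.add_lt_add_right (ZMod.val_lt p.1) _
        _ = (n / k1) * (p.2.val + 1) := by ring
        _ ≤ (n / k1) * k1 := Nat.mul_le_mul_left (n / k1) (ZMod.val_lt p.2)
        _ = n := by rw [mul_comm]; exact hnk
    have heq : φ p = ((p.1.val + (n / k1) * p.2.val : ℕ) : ZMod n) := by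
      rw [hφ]; push_cast; ring
    rw [heq, ZMod.val_cast_of_lt hlt]
  have hinj : Function.Injective φ := by
    intro p q hpq
    have h1 : p.1.val + (n / k1) * p.2.val = q.1.val + (n / k1) * q.2.val := by
      rw [← hφval p, ← hφval q, hpq]
    have h2 : p.1.val = q.1.val := by
      have := congrArg (· % (n / k1)) h1
      simpa [Nat.add_mul_mod_self_left, Nat.mod_eq_of_lt (ZMod.val_lt p.1),
        Nat.mod_eq_of_lt (ZMod.val_lt q.1)] using this
    have h3 : p.2.val = q.2.val := by
      rw [h2] at h1
      exact Nat.eq_of_mul_eq_mul_left (Nat.pos_of_ne_zero (NeZero.ne (n / k1)))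
        (Nat.add_left_cancel h1)
    exact Prod.ext (ZMod.val_injective (n / k1) h2) (ZMod.val_injective k1 h3)
  have hbij : Function.Bijective φ := by
    rw [Fintype.bijective_iff_injective_and_card]
    refine ⟨hinj, ?_⟩
    simp only [Fintype.card_prod, ZMod.card]
    rw [mul_comm]; exact hnk
  rw [dft_eq, dft_eq]
  rw [← Fintype.sum_bijective φ hbij
    (fun p => (G (φ p) * X (φ p + a)) * chr n ((k1 : ZMod n) * (j.val : ZMod n) * φ p))
    (fun x => (G x * X (x + a)) * chr n ((k1 : ZMod n) * (j.val : ZMod n) * x))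
    (fun p => rfl)]
  rw [Fintype.sum_prod_type]
  unfold downsample
  simp only [Finset.sum_mul, Finset.mul_sum]
  refine Finset.sum_congr rfl fun t _ => ?_
  refine Finset.sum_congr rfl fun i _ => ?_
  have hchr : chr n ((k1 : ZMod n) * (j.val : ZMod n) * φ (t, i)) = chr (n / k1) (j * t) := by
    have e1 : chr n ((k1 : ZMod n) * (j.val : ZMod n) * φ (t, i))
        = eZ n ((k1 : ℤ) * (j.val : ℤ) * ((t.val : ℤ) + ((n / k1 : ℕ) : ℤ) * (i.val : ℤ))) := by
      apply chr_eq
      rw [hφ]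
      simp only [Int.cast_mul, Int.cast_add, Int.cast_natCast]
    have e2 : chr (n / k1) (j * t) = eZ (n / k1) ((j.val : ℤ) * (t.val : ℤ)) := by
      apply chr_eq
      push_cast [-Int.natCast_div]
      simp [ZMod.natCast_val, ZMod.cast_id]
    rw [e1, e2]
    have e3 : eZ n ((k1 : ℤ) * (j.val : ℤ) * ((t.val : ℤ) + ((n / k1 : ℕ) : ℤ) * (i.val : ℤ)))
        = eZ n ((k1 : ℤ) * ((j.val : ℤ) * (t.val : ℤ))) := by
      apply eZ_congr
      apply Int.ModEq.symm
      apply Int.modEq_iff_dvd.mpr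
      refine ⟨((j.val : ℤ) * (i.val : ℤ)), ?_⟩
      have hnZ : ((n : ℕ) : ℤ) = ((k1 : ℕ) : ℤ) * ((n / k1 : ℕ) : ℤ) := by
        exact_mod_cast hnk.symm
      rw [hnZ]; ring
    rw [e3]
    have e4 : eZ n ((k1 : ℤ) * ((j.val : ℤ) * (t.val : ℤ)))
        = eZ (k1 * (n / k1)) ((k1 : ℤ) * ((j.val : ℤ) * (t.val : ℤ))) := by rw [hnk]
    rw [e4, eZ_mul_left k1 (n / k1) hkC]
  rw [hchr]
  have hninv : (n:ℂ)⁻¹ = ((n / k1 : ℕ):ℂ)⁻¹ * (k1:ℂ)⁻¹ := by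
    have : (n : ℂ) = (k1 : ℂ) * ((n / k1 : ℕ) : ℂ) := by exact_mod_cast hnk.symm
    rw [this, mul_inv]; ring
  rw [hninv]
  ring

/-- The duality of subsampling and aliasing: for `Ĝ` symmetric about zero,
`r ∈ [2k1]`, `a_r = nr/(2k1)` and `Z^r` the corresponding downsampled signal,
`Ẑ^r_j = ∑_{f ∈ [n]} Ĝ_{f − k1·j} X̂_f ω_n^{a_r·f}` for every `j ∈ [n/k1]`. -/
theorem dft_downsample (n k1 : ℕ) [NeZero n] [NeZero k1] [NeZero (n / k1)]
    [NeZero (2 * k1)]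
    (hn : ∃ a, n = 2 ^ a) (hk1 : ∃ a, k1 = 2 ^ a) (hkn : 2 * k1 ≤ n)
    (X G : ZMod n → ℂ) (hGsymm : ∀ f : ZMod n, dft n G (-f) = dft n G f)
    (r : ZMod (2 * k1)) (j : ZMod (n / k1)) :
    dft (n / k1)
        (downsample n k1 X G (((n / (2 * k1) : ℕ) : ZMod n) * (r.val : ZMod n))) j =
      ∑ f : ZMod n,
        dft n G (f - (k1 : ZMod n) * (j.val : ZMod n)) * dft n X f *
          Complex.exp (2 * Real.pi * Complex.I *
            ((((n / (2 * k1) : ℕ) : ZMod n) * (r.val : ZMod n) * f).val : ℂ) / (n : ℂ)) := by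
  obtain ⟨b, hb⟩ := hn
  obtain ⟨c, hc⟩ := hk1
  have hdvd : k1 ∣ n := by
    subst hb hc
    have hcb : c ≤ b := by
      have h1 : 2 ^ c ≤ 2 ^ b := le_trans (Nat.le_mul_of_pos_left _ (by norm_num)) hkn
      exact (Nat.pow_le_pow_iff_right (by norm_num)).mp h1
    exact pow_dvd_pow 2 hcb
  have hnk : k1 * (n / k1) = n := Nat.mul_div_cancel' hdvd
  rw [downsample_dft n k1 hnk X G _ j, dft_mul_shift]
  refine Finset.sum_congr rfl fun f _ => ?_
  congr 1
  · congr 1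
    rw [← neg_sub f ((k1 : ZMod n) * (j.val : ZMod n)), hGsymm]
  · have h1 : chr n (-(((n / (2 * k1) : ℕ) : ZMod n) * (r.val : ZMod n) * f))
        = eZ n (-(((((n / (2 * k1) : ℕ) : ZMod n) * (r.val : ZMod n) * f).val : ℤ))) := by
      apply chr_eq
      push_cast [-Int.natCast_div]
      simp [ZMod.natCast_val, ZMod.cast_id]
    rw [h1]
    unfold eZ
    congr 1
    push_cast [-Int.natCast_div]
    ring
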